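/- Let F : (−1,1) → ℝ be C¹, convex with F'' ≥ θ > 0, F'(s) → ±∞ as s → ±1, and let m ∈ [0,1) be such that F' > 0 on [m,1), F' < 0 on (−1,−m]. Let Γ be a closed surface of finite measure and φ : Γ → (−1,1) measurable with mean value φ̄ satisfying |φ̄| < m. Then ‖F'(φ)‖_{L¹(Γ)} ≤ C₁ |∫_Γ F'(φ)(φ − φ̄) dσ| + C₂, where C₁ = 1/δ₁ with δ₁ = min{φ̄+m, m−φ̄} and C₂ = 2 max_{|s|≤m} |F'(s)| · |Γ|. -/

import Mathlib

open MeasureTheory Set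

theorem stmt_3 {X : Type*} [MeasurableSpace X] (μ : Measure X) [IsFiniteMeasure μ]
    (θ : ℝ) (hθ : 0 < θ) (F : ℝ → ℝ) (g : ℝ → ℝ) (hg : g = deriv F)
    (hF : ContDiffOn ℝ 1 F (Ioo (-1) 1))
    (hconv : ∀ s ∈ Ioo (-1:ℝ) 1, ∀ t ∈ Ioo (-1:ℝ) 1, θ * (t - s) ^ 2 ≤ (g t - g s) * (t - s))
    (htop : Filter.Tendsto g (nhdsWithin 1 (Ioo (-1:ℝ) 1)) Filter.atTop)
    (hbot : Filter.Tendsto g (nhdsWithin (-1) (Ioo (-1:ℝ) 1)) Filter.atBot)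
    (m : ℝ) (hm : m ∈ Ico (0:ℝ) 1)
    (hpos : ∀ s ∈ Ico m 1, 0 < g s) (hneg : ∀ s ∈ Ioc (-1) (-m), g s < 0)
    (φ : X → ℝ) (hφmeas : Measurable φ) (hφrange : ∀ x, φ x ∈ Ioo (-1:ℝ) 1)
    (hφint : Integrable φ μ)
    (φbar : ℝ) (hφbar : φbar = (∫ x, φ x ∂μ) / (μ univ).toReal)
    (hmean : |φbar| < m)
    (hgint : Integrable (fun x => g (φ x)) μ)
    (hgint2 : Integrable (fun x => g (φ x) * (φ x - φbar)) μ) :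
    ∫ x, |g (φ x)| ∂μ ≤
      (1 / min (φbar + m) (m - φbar)) * |∫ x, g (φ x) * (φ x - φbar) ∂μ| +
        2 * (⨆ s ∈ Icc (-m) m, |g s|) * (μ univ).toReal := by
  obtain ⟨hm0, hm1⟩ := hm
  obtain ⟨hb1, hb2⟩ := abs_lt.1 hmean
  set δ := min (φbar + m) (m - φbar) with hδdef
  have hδpos : 0 < δ := lt_min (by linarith) (by linarith)
  have hδ1 : δ ≤ φbar + m := min_le_left _ _
  have hδ2 : δ ≤ m - φbar := min_le_right _ _
  set M := ⨆ s ∈ Icc (-m) m, |g s| with hMdef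
  -- monotonicity of g on (-1,1)
  have hmono : ∀ s ∈ Ioo (-1:ℝ) 1, ∀ t ∈ Ioo (-1:ℝ) 1, s ≤ t → g s ≤ g t := by
    intro s hs t ht hst
    rcases eq_or_lt_of_le hst with rfl | h
    · exact le_refl _
    · nlinarith [hconv s hs t ht, sq_nonneg (t - s)]
  have hmm : (-m : ℝ) ∈ Ioo (-1:ℝ) 1 := ⟨by linarith, by linarith⟩
  have hmm' : (m : ℝ) ∈ Ioo (-1:ℝ) 1 := ⟨by linarith, hm1⟩
  have hsub : Icc (-m) m ⊆ Ioo (-1:ℝ) 1 := fun s hs => ⟨by linarith [hs.1], by linarith [hs.2]⟩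
  -- boundedness: |g s| ≤ M on Icc (-m) m
  have hBval : ∀ s ∈ Icc (-m) m, |g s| ≤ max (max |g (-m)| |g m|) 0 := by
    intro s hs
    have h1 : g (-m) ≤ g s := hmono _ hmm _ (hsub hs) hs.1
    have h2 : g s ≤ g m := hmono _ (hsub hs) _ hmm' hs.2
    have := abs_nonneg (g (-m))
    have := abs_nonneg (g m)
    have h3 : g s ≤ max (max |g (-m)| |g m|) 0 := by
      have : g m ≤ |g m| := le_abs_self _
      have : |g m| ≤ max (max |g (-m)| |g m|) 0 := le_max_of_le_left (le_max_right _ _)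
      linarith [le_abs_self (g m)]
    have h4 : -(max (max |g (-m)| |g m|) 0) ≤ g s := by
      have h5 : |g (-m)| ≤ max (max |g (-m)| |g m|) 0 := le_max_of_le_left (le_max_left _ _)
      have := neg_abs_le (g (-m))
      linarith
    rw [abs_le]; exact ⟨h4, h3⟩
  have hbddA : BddAbove (Set.range fun s => ⨆ _ : s ∈ Icc (-m) m, |g s|) := by
    refine ⟨max (max |g (-m)| |g m|) 0, ?_⟩
    rintro y ⟨s, rfl⟩
    dsimp only
    by_cases hs : s ∈ Icc (-m) m
    · rw [ciSup_pos (f := fun _ : s ∈ Icc (-m) m => |g s|) hs]; exact hBval s hs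
    · haveI : IsEmpty (s ∈ Icc (-m) m) := ⟨hs⟩
      rw [Real.iSup_of_isEmpty]
      exact le_max_right _ _
  have hbdd : ∀ s ∈ Icc (-m) m, |g s| ≤ M := by
    intro s hs
    calc |g s| = ⨆ _ : s ∈ Icc (-m) m, |g s| := (ciSup_pos (f := fun _ : s ∈ Icc (-m) m => |g s|) hs).symm
      _ ≤ M := le_ciSup hbddA s
  have hM0 : 0 ≤ M := le_trans (abs_nonneg _) (hbdd m ⟨by linarith, le_refl m⟩)
  have hφbarIcc : φbar ∈ Icc (-m) m := ⟨le_of_lt hb1, le_of_lt hb2⟩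
  have hφbarIoo : φbar ∈ Ioo (-1:ℝ) 1 := hsub hφbarIcc
  have hbM : |g φbar| ≤ M := hbdd _ hφbarIcc
  obtain ⟨hbM1, hbM2⟩ := abs_le.1 hbM
  -- pointwise key estimate
  have key : ∀ x, δ * |g (φ x)| ≤ (g (φ x) - g φbar) * (φ x - φbar) + 2 * M * δ := by
    intro x
    obtain ⟨hx1, hx2⟩ := hφrange x
    set s := φ x
    set a := g s with ha
    rcases le_or_gt m s with hcase | hcase
    · -- s ≥ m : a > 0
      have hapos : 0 < a := hpos s ⟨hcase, hx2⟩
      have hba : g φbar ≤ a := hmono _ hφbarIoo _ ⟨hx1, hx2⟩ (by linarith)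
      rw [abs_of_pos hapos]
      nlinarith [mul_nonneg (by linarith : (0:ℝ) ≤ a - g φbar)
        (by linarith : (0:ℝ) ≤ s - φbar - δ)]
    rcases le_or_gt s (-m) with hcase2 | hcase2
    · -- s ≤ -m : a < 0
      have haneg : a < 0 := hneg s ⟨hx1, hcase2⟩
      have hba : a ≤ g φbar := hmono _ ⟨hx1, hx2⟩ _ hφbarIoo (by linarith)
      rw [abs_of_neg haneg]
      nlinarith [mul_nonneg (by linarith : (0:ℝ) ≤ g φbar - a)
        (by linarith : (0:ℝ) ≤ φbar - s - δ)]
    · -- -m < s < m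
      have haM : |a| ≤ M := hbdd s ⟨le_of_lt hcase2, le_of_lt hcase⟩
      have hterm : 0 ≤ (a - g φbar) * (s - φbar) := by
        rcases le_total s φbar with h | h
        · have : a ≤ g φbar := hmono _ ⟨hx1, hx2⟩ _ hφbarIoo h
          have h6 := mul_nonneg (by linarith : (0:ℝ) ≤ g φbar - a) (by linarith : (0:ℝ) ≤ φbar - s)
          nlinarith
        · have : g φbar ≤ a := hmono _ hφbarIoo _ ⟨hx1, hx2⟩ h
          exact mul_nonneg (by linarith) (by linarith)
      nlinarith [abs_nonneg a]
  -- integrability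
  have hφc : Integrable (fun x => φ x - φbar) μ := hφint.sub (integrable_const _)
  have hint1 : Integrable (fun x => δ * |g (φ x)|) μ := (hgint.abs).const_mul δ
  have hint2a : Integrable (fun x => g (φ x) * (φ x - φbar) - g φbar * (φ x - φbar)) μ :=
    hgint2.sub (hφc.const_mul (g φbar))
  have hfun : (fun x => (g (φ x) - g φbar) * (φ x - φbar) + 2 * M * δ)
      = fun x => (g (φ x) * (φ x - φbar) - g φbar * (φ x - φbar)) + 2 * M * δ := by
    funext x; ring
  have hint2 : Integrable (fun x => (g (φ x) - g φbar) * (φ x - φbar) + 2 * M * δ) μ := by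
    rw [hfun]; exact hint2a.add (integrable_const _)
  have hle := integral_mono hint1 hint2 key
  -- compute both sides
  have hzero : ∫ x, (φ x - φbar) ∂μ = 0 := by
    rw [integral_sub hφint (integrable_const _), integral_const, smul_eq_mul]
    by_cases h : (μ univ).toReal = 0
    · have hμ : μ = 0 := by
        have := (ENNReal.toReal_eq_zero_iff _).1 h
        rcases this with h' | h'
        · exact Measure.measure_univ_eq_zero.1 h'
        · exact absurd h' (measure_ne_top μ univ)
      simp [hμ, h]
    · rw [hφbar]; field_simp; simp [Measure.real]
  have hLHS : ∫ x, δ * |g (φ x)| ∂μ = δ * ∫ x, |g (φ x)| ∂μ := integral_const_mul _ _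
  have hRHS : ∫ x, ((g (φ x) - g φbar) * (φ x - φbar) + 2 * M * δ) ∂μ
      = (∫ x, g (φ x) * (φ x - φbar) ∂μ) + 2 * M * δ * (μ univ).toReal := by
    rw [hfun, integral_add hint2a (integrable_const _),
      integral_sub hgint2 (hφc.const_mul (g φbar)), integral_const_mul, hzero,
      integral_const, smul_eq_mul, Measure.real]
    ring
  rw [hLHS, hRHS] at hle
  set I := ∫ x, g (φ x) * (φ x - φbar) ∂μ
  have hIle : I ≤ |I| := le_abs_self I
  have hμ0 : 0 ≤ (μ univ).toReal := ENNReal.toReal_nonneg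
  have h2 : δ * ∫ x, |g (φ x)| ∂μ ≤ |I| + 2 * M * δ * (μ univ).toReal := by linarith
  have h3 : ∫ x, |g (φ x)| ∂μ ≤ (|I| + 2 * M * δ * (μ univ).toReal) / δ := by
    rw [le_div_iff₀ hδpos]; linarith [h2]
  have h4 : (|I| + 2 * M * δ * (μ univ).toReal) / δ
      = (1 / δ) * |I| + 2 * M * (μ univ).toReal := by
    field_simp
  rw [h4] at h3
  linarith [h3]
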